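/- The Stirling numbers of the second kind can be written as a signed sum over partition types: s₂(n,k) = Σ over (2n−1−k, n−1)-partition types (r₁,…,r_{n−k+1}) of (−1)^{r₁−k+1} · (binomial(2n−2,k−1)/binomial(2n−2,r₁)) · ω(r)/(1^{r₁}·2^{r₂}⋯), where ω(r) = (Σi·rᵢ)!/(r₁!·r₂!⋯). -/

import Mathlib

open Finset MvPolynomial

/-- The set of (n,k)-partition types: tuples (r₁,…,rₙ) (rⱼ = r (j-1)) with Σ rᵢ = k, Σ i·rᵢ = n. -/
def ptypes (n k : ℕ) : Finset (Fin n → ℕ) :=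
  (Fintype.piFinset fun _ : Fin n => Finset.range (n + 1)).filter
    fun r => (∑ i, r i) = k ∧ (∑ i, (i.1 + 1) * r i) = n

/-- Denominator of the Faà di Bruno coefficient: ∏ rᵢ!·(i!)^{rᵢ}. -/
def bruDenom {n : ℕ} (r : Fin n → ℕ) : ℕ :=
  ∏ i, (r i).factorial * ((i.1 + 1).factorial) ^ (r i)

/-- Partial exponential Bell polynomial (variable `X j` stands for X_{j+1}). -/
noncomputable def Bell (n k : ℕ) : MvPolynomial ℕ ℤ :=
  ∑ r ∈ ptypes n k,
    C ((n.factorial / bruDenom r : ℕ) : ℤ) * ∏ i, (X i.1 : MvPolynomial ℕ ℤ) ^ (r i)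

/-- Associated Bell polynomial: Bell with X₁ (= `X 0`) set to 0. -/
noncomputable def BellT (n k : ℕ) : MvPolynomial ℕ ℤ :=
  aeval (fun j => if j = 0 then 0 else (X j : MvPolynomial ℕ ℤ)) (Bell n k)

/-- Signed Stirling numbers of the first kind. -/
def s1 : ℕ → ℕ → ℤ
  | 0, 0 => 1
  | 0, _ + 1 => 0
  | _ + 1, 0 => 0
  | n + 1, k + 1 => s1 n k - n * s1 n (k + 1)

/-- Stirling numbers of the second kind. -/
def s2 : ℕ → ℕ → ℤ
  | 0, 0 => 1
  | 0, _ + 1 => 0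
  | _ + 1, 0 => 0
  | n + 1, k + 1 => s2 n k + (k + 1) * s2 n (k + 1)

/-- Unsigned Stirling numbers of the first kind (cycle numbers). -/
def cyc : ℕ → ℕ → ℕ
  | 0, 0 => 1
  | 0, _ + 1 => 0
  | _ + 1, 0 => 0
  | n + 1, k + 1 => cyc n k + n * cyc n (k + 1)

/-- First entry r₁ of a partition type (0 if the tuple is empty). -/
def firstEntry {m : ℕ} (r : Fin m → ℕ) : ℕ :=
  ∑ i ∈ Finset.univ.filter (fun i : Fin m => i.1 = 0), r i

/-- Multivariate Stirling polynomials of the first kind, via the differential recurrence. -/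
noncomputable def Spoly : ℕ → ℕ → MvPolynomial ℕ ℤ
  | 0, _ => 0
  | 1, k => if k = 1 then 1 else 0
  | n + 2, k =>
    if k = 0 then 0 else
      C (-(2 * (n : ℤ) + 1)) * X 1 * Spoly (n + 1) k
        + X 0 * (Spoly (n + 1) (k - 1)
          + ∑ j ∈ Finset.Icc 1 ((n + 1) - k + 1),
              X j * pderiv (j - 1) (Spoly (n + 1) k))

lemma mem_ptypes {m j : ℕ} {r : Fin m → ℕ} :
    r ∈ ptypes m j ↔ (∑ i, r i) = j ∧ (∑ i, (i.1 + 1) * r i) = m := by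
  unfold ptypes
  simp only [Finset.mem_filter, Fintype.mem_piFinset, Finset.mem_range]
  constructor
  · tauto
  · intro h
    refine ⟨fun i => ?_, h⟩
    have h1 : (i.1 + 1) * r i ≤ ∑ i, (i.1 + 1) * r i :=
      Finset.single_le_sum (f := fun i => (i.1 + 1) * r i)
        (fun _ _ => Nat.zero_le _) (Finset.mem_univ i)
    rw [h.2] at h1
    have h2 : r i ≤ (i.1 + 1) * r i := Nat.le_mul_of_pos_left _ (Nat.succ_pos _)
    omega

lemma firstEntry_eq {m : ℕ} (hm : 0 < m) (r : Fin m → ℕ) :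
    firstEntry r = r ⟨0, hm⟩ := by
  unfold firstEntry
  rw [Finset.sum_filter, Finset.sum_eq_single ⟨0, hm⟩]
  · simp
  · intro b _ hb
    have : b.1 ≠ 0 := fun h => hb (Fin.ext h)
    simp [this]
  · simp

lemma firstEntry_zero {r : Fin 0 → ℕ} : firstEntry r = 0 := by
  unfold firstEntry
  simp [Finset.filter_eq_empty_iff]

lemma firstEntry_update {m : ℕ} (r : Fin m → ℕ) (i : Fin m) (v : ℕ) (hi : i.1 ≠ 0) :
    firstEntry (Function.update r i v) = firstEntry r := by
  unfold firstEntry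
  refine Finset.sum_congr rfl fun b hb => ?_
  simp only [Finset.mem_filter] at hb
  have : b ≠ i := fun h => hi (h ▸ hb.2)
  simp [Function.update_of_ne this]

section trunc

variable {γ : Type*}

lemma sum_trunc [AddCommMonoid γ] {M M' : ℕ} (h : M' ≤ M) (r : Fin M → ℕ)
    (hz : ∀ t : Fin M, M' ≤ t.1 → r t = 0) (F : ℕ → ℕ → γ) (hF : ∀ t, F t 0 = 0) :
    ∑ t : Fin M, F t.1 (r t) = ∑ t : Fin M', F t.1 (r (Fin.castLE h t)) := by
  have e1 : ∑ t : Fin M, F t.1 (r t)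
      = ∑ t ∈ Finset.range M, (fun n => if hn : n < M then F n (r ⟨n, hn⟩) else 0) t := by
    rw [← Fin.sum_univ_eq_sum_range]
    exact Finset.sum_congr rfl fun i _ => by simp [i.isLt]
  have e2 : ∑ t : Fin M', F t.1 (r (Fin.castLE h t))
      = ∑ t ∈ Finset.range M', (fun n => if hn : n < M then F n (r ⟨n, hn⟩) else 0) t := by
    rw [← Fin.sum_univ_eq_sum_range]
    refine Finset.sum_congr rfl fun i _ => ?_
    have hi : i.1 < M := lt_of_lt_of_le i.isLt h
    simp only [dif_pos hi]
    rfl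
  rw [e1, e2]
  refine (Finset.sum_subset (Finset.range_subset_range.2 h) fun t ht hnt => ?_).symm
  simp only [Finset.mem_range] at ht hnt
  have hM' : M' ≤ t := le_of_not_gt hnt
  simp only [dif_pos ht]
  rw [hz ⟨t, ht⟩ hM', hF]

lemma prod_trunc [CommMonoid γ] {M M' : ℕ} (h : M' ≤ M) (r : Fin M → ℕ)
    (hz : ∀ t : Fin M, M' ≤ t.1 → r t = 0) (F : ℕ → ℕ → γ) (hF : ∀ t, F t 0 = 1) :
    ∏ t : Fin M, F t.1 (r t) = ∏ t : Fin M', F t.1 (r (Fin.castLE h t)) := by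
  have e1 : ∏ t : Fin M, F t.1 (r t)
      = ∏ t ∈ Finset.range M, (fun n => if hn : n < M then F n (r ⟨n, hn⟩) else 1) t := by
    rw [← Fin.prod_univ_eq_prod_range]
    exact Finset.prod_congr rfl fun i _ => by simp [i.isLt]
  have e2 : ∏ t : Fin M', F t.1 (r (Fin.castLE h t))
      = ∏ t ∈ Finset.range M', (fun n => if hn : n < M then F n (r ⟨n, hn⟩) else 1) t := by
    rw [← Fin.prod_univ_eq_prod_range]
    refine Finset.prod_congr rfl fun i _ => ?_
    have hi : i.1 < M := lt_of_lt_of_le i.isLt h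
    simp only [dif_pos hi]
    rfl
  rw [e1, e2]
  refine (Finset.prod_subset (Finset.range_subset_range.2 h) fun t ht hnt => ?_).symm
  simp only [Finset.mem_range] at ht hnt
  have hM' : M' ≤ t := le_of_not_gt hnt
  simp only [dif_pos ht]
  rw [hz ⟨t, ht⟩ hM', hF]

end trunc



def iD {m : ℕ} (r : Fin m → ℕ) : ℚ :=
  ((∏ i, (r i).factorial * (i.1 + 1) ^ (r i) : ℕ) : ℚ)⁻¹

def F0 (M C : ℕ) : Finset (Fin M → ℕ) := (ptypes M C).filter fun r => firstEntry r = 0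

def E (M C : ℕ) : ℚ := ∑ r ∈ F0 M C, iD r

def pset (M M' C : ℕ) : Finset (Fin M → ℕ) :=
  (Fintype.piFinset fun _ : Fin M => Finset.range (M + 1)).filter
    fun r => (∑ i, r i) = C ∧ (∑ i, (i.1 + 1) * r i) = M' ∧ firstEntry r = 0

lemma ptypes_entry_le {m j : ℕ} {r : Fin m → ℕ} (hr : r ∈ ptypes m j) (i : Fin m) :
    r i ≤ m := by
  have h := (mem_ptypes.1 hr).2
  have h1 : (i.1 + 1) * r i ≤ ∑ i, (i.1 + 1) * r i :=
    Finset.single_le_sum (f := fun i => (i.1 + 1) * r i)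
      (fun _ _ => Nat.zero_le _) (Finset.mem_univ i)
  rw [h] at h1
  have h2 : r i ≤ (i.1 + 1) * r i := Nat.le_mul_of_pos_left _ (Nat.succ_pos _)
  omega

lemma mem_pset {M M' C : ℕ} (h : M' ≤ M) {r : Fin M → ℕ} :
    r ∈ pset M M' C ↔
      (∑ i, r i) = C ∧ (∑ i, (i.1 + 1) * r i) = M' ∧ firstEntry r = 0 := by
  unfold pset
  simp only [Finset.mem_filter, Fintype.mem_piFinset, Finset.mem_range]
  constructor
  · tauto
  · intro hc
    refine ⟨fun i => ?_, hc⟩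
    have h1 : (i.1 + 1) * r i ≤ ∑ i, (i.1 + 1) * r i :=
      Finset.single_le_sum (f := fun i => (i.1 + 1) * r i)
        (fun _ _ => Nat.zero_le _) (Finset.mem_univ i)
    rw [hc.2.1] at h1
    have h2 : r i ≤ (i.1 + 1) * r i := Nat.le_mul_of_pos_left _ (Nat.succ_pos _)
    omega

lemma pset_entry_zero {M M' C : ℕ} {r : Fin M → ℕ} (hr : r ∈ pset M M' C)
    (t : Fin M) (ht : M' ≤ t.1) : r t = 0 := by
  have hc := (Finset.mem_filter.1 hr).2
  have h1 : (t.1 + 1) * r t ≤ ∑ i, (i.1 + 1) * r i :=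
    Finset.single_le_sum (f := fun i => (i.1 + 1) * r i)
      (fun _ _ => Nat.zero_le _) (Finset.mem_univ t)
  rw [hc.2.1] at h1
  nlinarith [Nat.zero_le (r t)]

lemma pad_sum {M M' C : ℕ} (h : M' ≤ M) :
    ∑ r ∈ pset M M' C, iD r = E M' C := by
  unfold E
  refine Finset.sum_nbij' (fun r => fun t => r (Fin.castLE h t))
    (fun r => fun t : Fin M => if ht : t.1 < M' then r ⟨t.1, ht⟩ else 0)
    ?_ ?_ ?_ ?_ ?_
  · -- trunc maps pset to F0
    intro r hr
    have hc := (Finset.mem_filter.1 hr).2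
    have hz := pset_entry_zero hr
    have hs1 : (∑ t : Fin M', r (Fin.castLE h t)) = C := by
      rw [← sum_trunc h r hz (fun _ v => v) (fun _ => rfl)]; exact hc.1
    have hs2 : (∑ t : Fin M', (t.1 + 1) * r (Fin.castLE h t)) = M' := by
      rw [← sum_trunc h r hz (fun n v => (n + 1) * v) (fun _ => by simp)]
      exact hc.2.1
    refine Finset.mem_filter.2 ⟨mem_ptypes.2 ⟨hs1, hs2⟩, ?_⟩
    rcases Nat.eq_zero_or_pos M' with hM' | hM'
    · subst hM'; exact firstEntry_zero
    · rw [firstEntry_eq hM']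
      have hM : 0 < M := lt_of_lt_of_le hM' h
      have := hc.2.2
      rw [firstEntry_eq hM] at this
      convert this using 2
      exact Fin.ext rfl
  · -- pad maps F0 to pset
    intro r hr
    have hrp := (Finset.mem_filter.1 hr).1
    have hfe := (Finset.mem_filter.1 hr).2
    have hm := mem_ptypes.1 hrp
    set p : Fin M → ℕ := fun t : Fin M => if ht : t.1 < M' then r ⟨t.1, ht⟩ else 0 with hp
    have hzp : ∀ t : Fin M, M' ≤ t.1 → p t = 0 := by
      intro t ht; simp only [hp, dif_neg (not_lt.2 ht)]
    have htr : ∀ t : Fin M', p (Fin.castLE h t) = r t := by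
      intro t
      have : (Fin.castLE h t).1 < M' := t.isLt
      simp only [hp, dif_pos this]
      exact congrArg r (Fin.ext rfl)
    refine (mem_pset h).2 ⟨?_, ?_, ?_⟩
    · rw [sum_trunc h p hzp (fun _ v => v) (fun _ => rfl)]
      simp only [htr]; exact hm.1
    · rw [sum_trunc h p hzp (fun n v => (n + 1) * v) (fun _ => by simp)]
      simp only [htr]; exact hm.2
    · rcases Nat.eq_zero_or_pos M with hM | hM
      · subst hM; exact firstEntry_zero
      · rw [firstEntry_eq hM]
        rcases Nat.eq_zero_or_pos M' with hM' | hM'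
        · simp [hp, hM']
        · simp only [hp, dif_pos hM']
          have := hfe
          rw [firstEntry_eq hM'] at this
          exact this
  · -- pad (trunc r) = r
    intro r hr
    funext t
    by_cases ht : t.1 < M'
    · simp only [dif_pos ht]
      congr 1
    · simp only [dif_neg ht]
      exact (pset_entry_zero hr t (le_of_not_gt ht)).symm
  · -- trunc (pad r) = r
    intro r _
    funext t
    have : (Fin.castLE h t).1 < M' := t.isLt
    simp only [dif_pos this]
    exact congrArg r (Fin.ext rfl)
  · -- weights
    intro r hr
    have hz := pset_entry_zero hr
    unfold iD
    congr 2
    exact prod_trunc h r hz (fun n v => v.factorial * (n + 1) ^ v) (fun _ => by simp)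

lemma denom_pos {m : ℕ} (r : Fin m → ℕ) :
    0 < (∏ i, (r i).factorial * (i.1 + 1) ^ (r i)) :=
  Finset.prod_pos fun i _ => Nat.mul_pos (Nat.factorial_pos _) (Nat.pow_pos (Nat.succ_pos _))

lemma E_zero_zero : E 0 0 = 1 := by
  have h : F0 0 0 = {fun _ : Fin 0 => 0} := by
    apply Finset.ext
    intro r
    simp only [Finset.mem_singleton]
    constructor
    · intro _; funext t; exact absurd t.isLt (by omega)
    · intro hr
      refine Finset.mem_filter.2 ⟨mem_ptypes.2 ⟨?_, ?_⟩, firstEntry_zero⟩ <;> simp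
  rw [E, h, Finset.sum_singleton, iD]
  simp

lemma E_C_zero {M : ℕ} (hM : 1 ≤ M) : E M 0 = 0 := by
  rw [E]
  apply Finset.sum_eq_zero
  intro r hr
  exfalso
  have hm := mem_ptypes.1 (Finset.mem_filter.1 hr).1
  have : ∀ i : Fin M, r i = 0 := by
    intro i
    have := Finset.sum_eq_zero_iff.1 hm.1
    exact this i (Finset.mem_univ i)
  have h2 := hm.2
  rw [Finset.sum_eq_zero (fun i _ => by rw [this i, mul_zero])] at h2
  omega

lemma E_vanish {M C : ℕ} (h : M < 2 * C) : E M C = 0 := by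
  rw [E]
  apply Finset.sum_eq_zero
  intro r hr
  exfalso
  have hm := mem_ptypes.1 (Finset.mem_filter.1 hr).1
  have hfe := (Finset.mem_filter.1 hr).2
  rcases Nat.eq_zero_or_pos M with hM | hM
  · subst hM
    have : (∑ i : Fin 0, r i) = 0 := rfl
    omega
  · have hr0 : r ⟨0, hM⟩ = 0 := (firstEntry_eq hM r).symm.trans hfe
    have hle : 2 * C ≤ M := by
      calc 2 * C = ∑ i : Fin M, 2 * r i := by rw [← Finset.mul_sum, hm.1]
        _ ≤ ∑ i : Fin M, (i.1 + 1) * r i := by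
            apply Finset.sum_le_sum
            intro i _
            rcases Nat.eq_zero_or_pos i.1 with hi | hi
            · have : i = ⟨0, hM⟩ := Fin.ext hi
              rw [this, hr0]; simp
            · exact Nat.mul_le_mul_right _ (by omega)
        _ = M := hm.2
    omega

lemma sum_comp_update {M : ℕ} {γ : Type*} [AddCommMonoid γ] (F : Fin M → ℕ → γ)
    (r : Fin M → ℕ) (i : Fin M) (v : ℕ) :
    ∑ t, F t (Function.update r i v t) = F i v + ∑ t ∈ Finset.univ.erase i, F t (r t) := by
  have h : (fun t => F t (Function.update r i v t))
      = Function.update (fun t => F t (r t)) i (F i v) := by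
    funext t
    by_cases ht : t = i
    · subst ht; simp
    · simp [Function.update_of_ne ht]
  calc ∑ t, F t (Function.update r i v t) = ∑ t, Function.update (fun t => F t (r t)) i (F i v) t := by
        rw [h]
    _ = F i v + ∑ t ∈ Finset.univ \ {i}, F t (r t) :=
        Finset.sum_update_of_mem (Finset.mem_univ i) _ _
    _ = F i v + ∑ t ∈ Finset.univ.erase i, F t (r t) := by
        rw [Finset.sdiff_singleton_eq_erase]

lemma prod_comp_update {M : ℕ} {γ : Type*} [CommMonoid γ] (F : Fin M → ℕ → γ)
    (r : Fin M → ℕ) (i : Fin M) (v : ℕ) :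
    ∏ t, F t (Function.update r i v t) = F i v * ∏ t ∈ Finset.univ.erase i, F t (r t) := by
  have h : (fun t => F t (Function.update r i v t))
      = Function.update (fun t => F t (r t)) i (F i v) := by
    funext t
    by_cases ht : t = i
    · subst ht; simp
    · simp [Function.update_of_ne ht]
  calc ∏ t, F t (Function.update r i v t) = ∏ t, Function.update (fun t => F t (r t)) i (F i v) t := by
        rw [h]
    _ = F i v * ∏ t ∈ Finset.univ \ {i}, F t (r t) :=
        Finset.prod_update_of_mem (Finset.mem_univ i) _ _
    _ = F i v * ∏ t ∈ Finset.univ.erase i, F t (r t) := by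
        rw [Finset.sdiff_singleton_eq_erase]

lemma sum_split {M : ℕ} {γ : Type*} [AddCommMonoid γ] (F : Fin M → ℕ → γ)
    (r : Fin M → ℕ) (i : Fin M) :
    ∑ t, F t (r t) = F i (r i) + ∑ t ∈ Finset.univ.erase i, F t (r t) :=
  (Finset.add_sum_erase _ _ (Finset.mem_univ i)).symm

lemma inner_eq {M C : ℕ} (hM : 1 ≤ M) (hC : 1 ≤ C) (i : Fin M) (hi : 1 ≤ i.1) :
    ∑ r ∈ F0 M C, ((i.1 + 1) * r i : ℚ) * iD r = E (M - (i.1 + 1)) (C - 1) := by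
  have hsub : M - (i.1 + 1) ≤ M := Nat.sub_le _ _
  rw [← pad_sum (C := C - 1) hsub]
  rw [← Finset.sum_filter_of_ne (p := fun r : Fin M → ℕ => r i ≠ 0)
    (fun r _ hne => by
      intro h0
      apply hne
      rw [h0]
      simp)]
  refine Finset.sum_nbij' (fun r => Function.update r i (r i - 1))
    (fun r => Function.update r i (r i + 1)) ?_ ?_ ?_ ?_ ?_
  · -- maps into pset
    intro r hr
    obtain ⟨hrF, hri⟩ := Finset.mem_filter.1 hr
    obtain ⟨hrp, hfe⟩ := Finset.mem_filter.1 hrF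
    obtain ⟨hs, hws⟩ := mem_ptypes.1 hrp
    obtain ⟨w, hw⟩ : ∃ w, r i = w + 1 := ⟨r i - 1, by omega⟩
    refine (mem_pset hsub).2 ⟨?_, ?_, ?_⟩
    · rw [sum_comp_update (fun _ v => v)]
      rw [sum_split (fun _ v => v) r i] at hs
      omega
    · rw [sum_comp_update (fun t v => (t.1 + 1) * v)]
      rw [sum_split (fun t v => (t.1 + 1) * v) r i] at hws
      rw [hw] at hws ⊢
      simp only [Nat.add_sub_cancel]
      have hexp : (i.1 + 1) * (w + 1) = (i.1 + 1) * w + (i.1 + 1) := by ring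
      omega
    · rw [firstEntry_update _ _ _ (by omega)]
      exact hfe
  · -- maps back into filtered F0
    intro r hr
    obtain ⟨hs, hws, hfe⟩ := (mem_pset hsub).1 hr
    have hiM : i.1 + 1 ≤ M := i.isLt
    refine Finset.mem_filter.2 ⟨Finset.mem_filter.2 ⟨mem_ptypes.2 ⟨?_, ?_⟩, ?_⟩, ?_⟩
    · rw [sum_comp_update (fun _ v => v)]
      rw [sum_split (fun _ v => v) r i] at hs
      omega
    · rw [sum_comp_update (fun t v => (t.1 + 1) * v)]
      rw [sum_split (fun t v => (t.1 + 1) * v) r i] at hws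
      have hexp : (i.1 + 1) * (r i + 1) = (i.1 + 1) * r i + (i.1 + 1) := by ring
      have hle : (i.1 + 1) * r i + ∑ t ∈ Finset.univ.erase i, (t.1 + 1) * r t = M - (i.1+1) := hws
      omega
    · rw [firstEntry_update _ _ _ (by omega)]
      exact hfe
    · simp
  · -- left inverse
    intro r hr
    obtain ⟨_, hri⟩ := Finset.mem_filter.1 hr
    simp only [Function.update_idem, Function.update_self]
    have : r i - 1 + 1 = r i := by omega
    rw [this, Function.update_eq_self]
  · -- right inverse
    intro r _
    simp only [Function.update_idem, Function.update_self, Nat.add_sub_cancel,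
      Function.update_eq_self]
  · -- weights
    intro r hr
    obtain ⟨hrF, hri⟩ := Finset.mem_filter.1 hr
    obtain ⟨w, hw⟩ : ∃ w, r i = w + 1 := ⟨r i - 1, by omega⟩
    have hden : (∏ t, (r t).factorial * (t.1 + 1) ^ (r t))
        = ((i.1 + 1) * r i) *
          ∏ t, ((Function.update r i (r i - 1)) t).factorial
            * (t.1 + 1) ^ ((Function.update r i (r i - 1)) t) := by
      rw [prod_comp_update (fun t v => v.factorial * (t.1 + 1) ^ v)]
      rw [Finset.mul_prod_erase Finset.univ
        (fun t => (r t).factorial * (t.1 + 1) ^ (r t)) (Finset.mem_univ i) |>.symm]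
      rw [hw]
      simp only [Nat.add_sub_cancel]
      rw [Nat.factorial_succ, pow_succ]
      ring
    unfold iD
    rw [hden]
    have h1 : ((i.1 + 1 : ℕ) * r i : ℚ) ≠ 0 := by
      have : r i ≠ 0 := hri
      positivity
    have h2 : ((∏ t, ((Function.update r i (r i - 1)) t).factorial
        * (t.1 + 1) ^ ((Function.update r i (r i - 1)) t) : ℕ) : ℚ) ≠ 0 := by
      exact_mod_cast (denom_pos _).ne'
    push_cast
    rw [mul_inv]
    field_simp

set_option maxHeartbeats 1000000 in
lemma E_rec {M C : ℕ} (hM : 1 ≤ M) (hC : 1 ≤ C) :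
    (M : ℚ) * E M C = ∑ v ∈ Finset.range (M - 1), E (M - 2 - v) (C - 1) := by
  obtain ⟨M', rfl⟩ : ∃ M', M = M' + 1 := ⟨M - 1, by omega⟩
  have step1 : ((M' + 1 : ℕ) : ℚ) * E (M' + 1) C
      = ∑ i : Fin (M' + 1), ∑ r ∈ F0 (M' + 1) C, ((i.1 + 1) * r i : ℚ) * iD r := by
    rw [Finset.sum_comm, E, Finset.mul_sum]
    refine Finset.sum_congr rfl fun r hr => ?_
    have hws := (mem_ptypes.1 (Finset.mem_filter.1 hr).1).2
    rw [← Finset.sum_mul]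
    congr 1
    rw [show ((M' + 1 : ℕ) : ℚ) = ((∑ i : Fin (M' + 1), (i.1 + 1) * r i : ℕ) : ℚ) by rw [hws]]
    push_cast
    rfl
  have step2 : ∀ i : Fin (M' + 1),
      ∑ r ∈ F0 (M' + 1) C, ((i.1 + 1) * r i : ℚ) * iD r
        = if i.1 = 0 then 0 else E (M' + 1 - (i.1 + 1)) (C - 1) := by
    intro i
    by_cases hi : i.1 = 0
    · rw [if_pos hi]
      apply Finset.sum_eq_zero
      intro r hr
      have hfe := (Finset.mem_filter.1 hr).2
      have h0 : 0 < M' + 1 := Nat.succ_pos _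
      have : i = ⟨0, h0⟩ := Fin.ext hi
      rw [this]
      rw [firstEntry_eq h0] at hfe
      rw [hfe]
      simp
    · rw [if_neg hi]
      exact inner_eq (Nat.succ_pos _) hC i (by omega)
  calc ((M' + 1 : ℕ) : ℚ) * E (M' + 1) C
      = ∑ i : Fin (M' + 1), (fun u => if u = 0 then 0 else E (M' + 1 - (u + 1)) (C - 1)) i.1 := by
        rw [step1]; exact Finset.sum_congr rfl fun i _ => step2 i
    _ = ∑ u ∈ Finset.range (M' + 1), (fun u => if u = 0 then 0 else E (M' + 1 - (u + 1)) (C - 1)) u :=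
        Fin.sum_univ_eq_sum_range
          (fun u => if u = 0 then 0 else E (M' + 1 - (u + 1)) (C - 1)) (M' + 1)
    _ = ∑ v ∈ Finset.range M', E (M' + 1 - (v + 1 + 1)) (C - 1) := by
        rw [Finset.sum_range_succ']
        simp
    _ = ∑ v ∈ Finset.range (M' + 1 - 1), E (M' + 1 - 2 - v) (C - 1) := by
        refine Finset.sum_congr (by norm_num) fun v _ => ?_
        congr 1
        omega

lemma E_two_term {M C : ℕ} (hM : 2 ≤ M) (hC : 1 ≤ C) :
    (M : ℚ) * E M C = E (M - 2) (C - 1) + ((M : ℚ) - 1) * E (M - 1) C := by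
  obtain ⟨M', rfl⟩ : ∃ M', M = M' + 2 := ⟨M - 2, by omega⟩
  have h0 : (M' + 2 : ℕ) - 1 = M' + 1 := by omega
  have h2 : (M' + 2 : ℕ) - 2 = M' := by omega
  rw [h0, h2, E_rec (by omega) hC, h0]
  have hsum : ∀ v ∈ Finset.range (M' + 1), E (M' + 2 - 2 - v) (C - 1) = E (M' - v) (C - 1) :=
    fun v _ => congrArg (fun x => E x (C - 1)) (by omega)
  rw [Finset.sum_congr rfl hsum, Finset.sum_range_succ' (fun v => E (M' - v) (C - 1)) M']
  have hrec : ((M' + 1 : ℕ) : ℚ) * E (M' + 1) C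
      = ∑ v ∈ Finset.range M', E (M' - (v + 1)) (C - 1) := by
    rw [E_rec (by omega) hC]
    exact Finset.sum_congr (by norm_num) fun v _ => congrArg (fun x => E x (C - 1)) (by omega)
  push_cast at hrec ⊢
  rw [show ((M' : ℚ) + 2 - 1) = (M' : ℚ) + 1 by ring, hrec]
  simp [add_comm]

noncomputable def Dq (M C : ℕ) : ℚ := (M.factorial : ℚ) * E M C

lemma Dq_zero_zero : Dq 0 0 = 1 := by rw [Dq, E_zero_zero]; simp

lemma Dq_C_zero {M : ℕ} (hM : 1 ≤ M) : Dq M 0 = 0 := by rw [Dq, E_C_zero hM, mul_zero]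

lemma Dq_vanish {M C : ℕ} (h : M < 2 * C) : Dq M C = 0 := by
  rw [Dq, E_vanish h, mul_zero]

lemma Dq_two_term {M C : ℕ} (hM : 2 ≤ M) (hC : 1 ≤ C) :
    Dq M C = ((M : ℚ) - 1) * (Dq (M - 1) C + Dq (M - 2) (C - 1)) := by
  obtain ⟨M', rfl⟩ : ∃ M', M = M' + 2 := ⟨M - 2, by omega⟩
  have h0 : (M' + 2 : ℕ) - 1 = M' + 1 := by omega
  have h2 : (M' + 2 : ℕ) - 2 = M' := by omega
  have htwo := E_two_term (M := M' + 2) (C := C) (by omega) hC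
  rw [h0, h2] at htwo ⊢
  unfold Dq
  have hfac : ((M' + 2).factorial : ℚ) = ((M' + 2 : ℕ) : ℚ) * ((M' + 1).factorial : ℚ) := by
    rw [show M' + 2 = (M' + 1) + 1 by ring, Nat.factorial_succ]
    push_cast
    ring
  have hfac2 : ((M' + 1).factorial : ℚ) = ((M' + 1 : ℕ) : ℚ) * (M'.factorial : ℚ) := by
    rw [Nat.factorial_succ]
    push_cast
    ring
  calc ((M' + 2).factorial : ℚ) * E (M' + 2) C
      = ((M' + 1).factorial : ℚ) * (((M' + 2 : ℕ) : ℚ) * E (M' + 2) C) := by rw [hfac]; ring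
    _ = ((M' + 1).factorial : ℚ) * (E M' (C - 1) + (((M' + 2 : ℕ) : ℚ) - 1) * E (M' + 1) C) := by
        rw [htwo]
    _ = (((M' + 2 : ℕ) : ℚ) - 1) * (((M' + 1).factorial : ℚ) * E (M' + 1) C
          + (M'.factorial : ℚ) * E M' (C - 1)) := by
        rw [hfac2]; push_cast; ring

lemma fiber_sum {m j f : ℕ} (hm : 1 ≤ m) (hfm : f ≤ m) (hfj : f ≤ j) :
    ∑ r ∈ (ptypes m j).filter (fun r => firstEntry r = f), iD r
      = ((f.factorial : ℚ))⁻¹ * E (m - f) (j - f) := by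
  rw [← pad_sum (C := j - f) (Nat.sub_le m f), Finset.mul_sum]
  refine Finset.sum_nbij' (fun r => Function.update r ⟨0, hm⟩ 0)
    (fun r => Function.update r ⟨0, hm⟩ f) ?_ ?_ ?_ ?_ ?_
  · intro r hr
    obtain ⟨hrp, hfe⟩ := Finset.mem_filter.1 hr
    obtain ⟨hs, hws⟩ := mem_ptypes.1 hrp
    rw [firstEntry_eq hm] at hfe
    refine (mem_pset (Nat.sub_le m f)).2 ⟨?_, ?_, ?_⟩
    · rw [sum_comp_update (fun _ v => v)]
      rw [sum_split (fun _ v => v) r ⟨0, hm⟩] at hs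
      rw [hfe] at hs
      omega
    · rw [sum_comp_update (fun t v => (t.1 + 1) * v)]
      rw [sum_split (fun t v => (t.1 + 1) * v) r ⟨0, hm⟩] at hws
      rw [hfe] at hws
      simp only [Fin.val_mk, zero_add, one_mul, mul_zero] at hws ⊢
      omega
    · rw [firstEntry_eq hm]
      exact Function.update_self _ _ _
  · intro r hr
    obtain ⟨hs, hws, hfe⟩ := (mem_pset (Nat.sub_le m f)).1 hr
    rw [firstEntry_eq hm] at hfe
    refine Finset.mem_filter.2 ⟨mem_ptypes.2 ⟨?_, ?_⟩, ?_⟩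
    · rw [sum_comp_update (fun _ v => v)]
      rw [sum_split (fun _ v => v) r ⟨0, hm⟩] at hs
      rw [hfe] at hs
      omega
    · rw [sum_comp_update (fun t v => (t.1 + 1) * v)]
      rw [sum_split (fun t v => (t.1 + 1) * v) r ⟨0, hm⟩] at hws
      rw [hfe] at hws
      simp only [Fin.val_mk, zero_add, one_mul, mul_zero] at hws ⊢
      omega
    · rw [firstEntry_eq hm]
      exact Function.update_self _ _ _
  · intro r hr
    obtain ⟨_, hfe⟩ := Finset.mem_filter.1 hr
    rw [firstEntry_eq hm] at hfe
    show Function.update (Function.update r ⟨0, hm⟩ 0) ⟨0, hm⟩ f = r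
    rw [Function.update_idem, ← hfe, Function.update_eq_self]
  · intro r hr
    obtain ⟨_, _, hfe⟩ := (mem_pset (Nat.sub_le m f)).1 hr
    rw [firstEntry_eq hm] at hfe
    show Function.update (Function.update r ⟨0, hm⟩ f) ⟨0, hm⟩ 0 = r
    rw [Function.update_idem]
    have h := Function.update_eq_self (⟨0, hm⟩ : Fin m) r
    rw [hfe] at h
    exact h
  · intro r hr
    obtain ⟨hrp, hfe⟩ := Finset.mem_filter.1 hr
    rw [firstEntry_eq hm] at hfe
    have hden : (∏ t, (r t).factorial * (t.1 + 1) ^ (r t))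
        = f.factorial * ∏ t, ((Function.update r ⟨0, hm⟩ 0) t).factorial
            * (t.1 + 1) ^ ((Function.update r ⟨0, hm⟩ 0) t) := by
      rw [prod_comp_update (fun t v => v.factorial * (t.1 + 1) ^ v)]
      rw [(Finset.mul_prod_erase Finset.univ
        (fun t => (r t).factorial * (t.1 + 1) ^ (r t)) (Finset.mem_univ ⟨0, hm⟩)).symm]
      rw [hfe]
      simp
    unfold iD
    rw [hden]
    push_cast
    rw [mul_inv]

noncomputable def Rsum (N k' : ℕ) : ℚ :=
  ∑ u ∈ Finset.range (N + 1),
    (-1 : ℚ) ^ (N - u) * ((N + k' + u).choose k' : ℚ) * Dq (N + u) u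

lemma star (N k' : ℕ) :
    ∑ u ∈ Finset.range (N + 2),
      (-1 : ℚ) ^ (N + 1 - u) * ((N + k' + u).choose k' : ℚ) * Dq (N + 1 + u) u
    = ((k' : ℚ) + 1) * Rsum N k' := by
  set f : ℕ → ℚ := fun u =>
    (-1 : ℚ) ^ (N + 1 - u) * ((N + k' + u).choose k' : ℚ) * Dq (N + 1 + u) u with hf
  set h : ℕ → ℚ := fun w =>
    (-1 : ℚ) ^ (N + 1 - w) * ((N + k' + w).choose k' : ℚ) * (((N + w : ℕ)) : ℚ) * Dq (N + w) w
    with hh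
  have hf0 : f 0 = 0 := by
    simp only [hf, Dq_C_zero (show 1 ≤ N + 1 + 0 by omega), mul_zero]
  have hh0 : h 0 = 0 := by
    rcases Nat.eq_zero_or_pos N with hN | hN
    · subst hN; simp [hh]
    · simp only [hh, Dq_C_zero (show 1 ≤ N + 0 by omega), mul_zero]
  have hhtop : h (N + 1) = 0 := by
    simp only [hh, Dq_vanish (show N + (N + 1) < 2 * (N + 1) by omega), mul_zero]
  have step : ∀ v ∈ Finset.range (N + 1), f (v + 1) = h (v + 1)
      + (-1 : ℚ) ^ (N - v) * ((N + k' + (v + 1)).choose k' : ℚ) * (((N + 1 + v : ℕ)) : ℚ)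
        * Dq (N + v) v := by
    intro v _
    have hM : Dq (N + 1 + (v + 1)) (v + 1)
        = (((N + 1 + (v + 1) : ℕ) : ℚ) - 1) *
          (Dq (N + 1 + (v + 1) - 1) (v + 1) + Dq (N + 1 + (v + 1) - 2) (v + 1 - 1)) :=
      Dq_two_term (by omega) (by omega)
    have e1 : N + 1 + (v + 1) - 1 = N + (v + 1) := by omega
    have e2 : N + 1 + (v + 1) - 2 = N + v := by omega
    have e3 : v + 1 - 1 = v := by omega
    have e4 : N + 1 - (v + 1) = N - v := by omega
    have e5 : (((N + 1 + (v + 1) : ℕ) : ℚ) - 1) = ((N + 1 + v : ℕ) : ℚ) := by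
      push_cast; ring
    rw [hf, hh]
    simp only [hM, e1, e2, e3, e4, e5]
    push_cast
    ring
  calc ∑ u ∈ Finset.range (N + 2), f u
      = ∑ v ∈ Finset.range (N + 1), f (v + 1) + f 0 := Finset.sum_range_succ' f (N + 1)
    _ = ∑ v ∈ Finset.range (N + 1), (h (v + 1)
          + (-1 : ℚ) ^ (N - v) * ((N + k' + (v + 1)).choose k' : ℚ) * (((N + 1 + v : ℕ)) : ℚ)
            * Dq (N + v) v) := by rw [hf0, add_zero]; exact Finset.sum_congr rfl step
    _ = (∑ v ∈ Finset.range (N + 1), h (v + 1))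
          + ∑ v ∈ Finset.range (N + 1), (-1 : ℚ) ^ (N - v)
              * ((N + k' + (v + 1)).choose k' : ℚ) * (((N + 1 + v : ℕ)) : ℚ) * Dq (N + v) v :=
        Finset.sum_add_distrib
    _ = (∑ w ∈ Finset.range (N + 1), h w)
          + ∑ v ∈ Finset.range (N + 1), (-1 : ℚ) ^ (N - v)
              * ((N + k' + (v + 1)).choose k' : ℚ) * (((N + 1 + v : ℕ)) : ℚ) * Dq (N + v) v := by
        congr 1
        have := Finset.sum_range_succ' h (N + 1)
        rw [hh0, add_zero] at this
        rw [← this, Finset.sum_range_succ, hhtop, add_zero]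
    _ = ∑ w ∈ Finset.range (N + 1), ((-1 : ℚ) ^ (N - w) *
          (((N + k' + (w + 1)).choose k' : ℚ) * (((N + 1 + w : ℕ)) : ℚ)
            - ((N + k' + w).choose k' : ℚ) * (((N + w : ℕ)) : ℚ)) * Dq (N + w) w) := by
        rw [← Finset.sum_add_distrib]
        refine Finset.sum_congr rfl fun w hw => ?_
        have hw' : w ≤ N := by simp at hw; omega
        have hsg : (-1 : ℚ) ^ (N + 1 - w) = -(-1 : ℚ) ^ (N - w) := by
          rw [show N + 1 - w = (N - w) + 1 by omega, pow_succ]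
          ring
        simp only [hh, hsg]
        ring
    _ = ∑ w ∈ Finset.range (N + 1), ((k' : ℚ) + 1) *
          ((-1 : ℚ) ^ (N - w) * ((N + k' + w).choose k' : ℚ) * Dq (N + w) w) := by
        refine Finset.sum_congr rfl fun w _ => ?_
        have hch : ((N + k' + w).choose k') * (N + k' + w + 1)
            = ((N + k' + w + 1).choose k') * (N + w + 1) := by
          have := Nat.choose_mul_succ_eq (N + k' + w) k'
          have he : N + k' + w + 1 - k' = N + w + 1 := by omega
          rw [he] at this
          exact this
        have hchq : (((N + k' + w).choose k' : ℚ)) * (((N + k' + w + 1 : ℕ)) : ℚ)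
            = (((N + k' + w + 1).choose k' : ℚ)) * (((N + w + 1 : ℕ)) : ℚ) := by
          exact_mod_cast congrArg (fun x : ℕ => (x : ℚ)) hch
        have e6 : N + k' + (w + 1) = N + k' + w + 1 := by ring
        have e7 : N + 1 + w = N + w + 1 := by ring
        rw [e6, e7, ← hchq]
        push_cast
        ring
    _ = ((k' : ℚ) + 1) * Rsum N k' := by
        rw [Rsum, Finset.mul_sum]

lemma s2_gt : ∀ n k : ℕ, n < k → s2 n k = 0 := by
  intro n
  induction n with
  | zero => intro k hk; obtain ⟨k', rfl⟩ : ∃ k', k = k' + 1 := ⟨k - 1, by omega⟩; rfl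
  | succ n ih =>
    intro k hk
    obtain ⟨k', rfl⟩ : ∃ k', k = k' + 1 := ⟨k - 1, by omega⟩
    show s2 n k' + (k' + 1) * s2 n (k' + 1) = 0
    rw [ih k' (by omega), ih (k' + 1) (by omega)]
    ring

lemma s2_diag : ∀ n : ℕ, s2 n n = 1 := by
  intro n
  induction n with
  | zero => rfl
  | succ n ih =>
    show s2 n n + (n + 1) * s2 n (n + 1) = 1
    rw [ih, s2_gt n (n + 1) (by omega)]
    ring

lemma s2_eq_Rsum : ∀ N k' : ℕ, ((s2 (N + k' + 1) (k' + 1) : ℤ) : ℚ) = Rsum N k' := by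
  intro N
  induction N with
  | zero =>
    intro k'
    rw [show 0 + k' + 1 = k' + 1 by ring, s2_diag]
    rw [Rsum]
    simp [Dq_zero_zero]
  | succ N ih =>
    intro k'
    induction k' with
    | zero =>
      have hdef : s2 (N + 1 + 1) (0 + 1) = s2 (N + 1) 0 + (0 + 1) * s2 (N + 1) (0 + 1) := rfl
      have hz : s2 (N + 1) 0 = 0 := rfl
      rw [show N + 1 + 0 + 1 = N + 1 + 1 from by omega, hdef, hz]
      have hih := ih 0
      rw [show N + 0 + 1 = N + 1 from by omega] at hih
      push_cast
      rw [hih]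
      have hgoal : Rsum (N + 1) 0 = Rsum N 0 := by
        have h1 : Rsum (N + 1) 0 = ∑ u ∈ Finset.range (N + 2),
            (-1 : ℚ) ^ (N + 1 - u) * ((N + 0 + u).choose 0 : ℚ) * Dq (N + 1 + u) u := by
          rw [Rsum]
          refine Finset.sum_congr (by norm_num) fun u _ => by simp
        rw [h1, star N 0]
        norm_num
      rw [hgoal]
      ring
    | succ k' ihk =>
      rw [show N + 1 + (k' + 1) + 1 = N + k' + 2 + 1 from by omega]
      have hdef : s2 (N + k' + 2 + 1) (k' + 1 + 1)
          = s2 (N + k' + 2) (k' + 1) + (k' + 1 + 1) * s2 (N + k' + 2) (k' + 1 + 1) := rfl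
      rw [hdef]
      have h1 : s2 (N + k' + 2) (k' + 1) = s2 (N + 1 + k' + 1) (k' + 1) :=
        congrArg (fun x => s2 x (k' + 1)) (by omega)
      have h2 : s2 (N + k' + 2) (k' + 1 + 1) = s2 (N + (k' + 1) + 1) (k' + 1 + 1) :=
        congrArg (fun x => s2 x (k' + 1 + 1)) (by omega)
      rw [h1, h2]
      push_cast
      push_cast at ihk
      rw [ihk, ih (k' + 1)]
      -- goal: Rsum (N+1) k' + (k'+1+1) * Rsum N (k'+1) = Rsum (N+1) (k'+1)
      have hkey : Rsum (N + 1) (k' + 1) = Rsum (N + 1) k'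
          + ∑ u ∈ Finset.range (N + 2),
              (-1 : ℚ) ^ (N + 1 - u) * ((N + (k' + 1) + u).choose (k' + 1) : ℚ)
                * Dq (N + 1 + u) u := by
        have hs1 : Rsum (N + 1) (k' + 1) = ∑ u ∈ Finset.range (N + 2),
            (-1 : ℚ) ^ (N + 1 - u) * ((N + 1 + (k' + 1) + u).choose (k' + 1) : ℚ)
              * Dq (N + 1 + u) u := by
          rw [Rsum]
          try exact Finset.sum_congr (by norm_num) fun u _ => rfl
        have hs2 : Rsum (N + 1) k' = ∑ u ∈ Finset.range (N + 2),
            (-1 : ℚ) ^ (N + 1 - u) * ((N + 1 + k' + u).choose k' : ℚ)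
              * Dq (N + 1 + u) u := by
          rw [Rsum]
          try exact Finset.sum_congr (by norm_num) fun u _ => rfl
        rw [hs1, hs2, ← Finset.sum_add_distrib]
        refine Finset.sum_congr rfl fun u _ => ?_
        have hpas : (N + 1 + (k' + 1) + u).choose (k' + 1)
            = (N + 1 + k' + u).choose k' + (N + (k' + 1) + u).choose (k' + 1) := by
          have e : N + 1 + (k' + 1) + u = (N + k' + 1 + u) + 1 := by omega
          rw [e, Nat.choose_succ_succ (N + k' + 1 + u) k']
          have e2 : N + 1 + k' + u = N + k' + 1 + u := by omega
          have e3 : N + (k' + 1) + u = N + k' + 1 + u := by omega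
          rw [e2, e3]
        rw [hpas]
        push_cast
        ring
      rw [hkey, star N (k' + 1)]
      push_cast
      ring

lemma fact_cast_ne {x : ℕ} : ((x.factorial : ℕ) : ℚ) ≠ 0 := by
  exact_mod_cast x.factorial_ne_zero

lemma choose_ratio {A c f : ℕ} (hc : c ≤ A) (hf : f ≤ A - c) :
    (A.choose c : ℚ) * ((A - c).choose f : ℚ) / (A.choose f : ℚ)
      = ((A - f).choose c : ℚ) := by
  have hfA : f ≤ A := le_trans hf (Nat.sub_le _ _)
  have hcAf : c ≤ A - f := by omega
  rw [Nat.cast_choose ℚ hc, Nat.cast_choose ℚ hf, Nat.cast_choose ℚ hfA,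
    Nat.cast_choose ℚ hcAf]
  have e1 : A - c - f = A - f - c := by omega
  rw [e1]
  rw [div_mul_div_comm, div_div_div_eq]
  rw [div_eq_div_iff (by positivity) (by
    have := fact_cast_ne (x := c)
    have := fact_cast_ne (x := A - f - c)
    positivity)]
  ring


theorem s2_as_signed_ptype_sum (n k : ℕ) (hk : 1 ≤ k) (hkn : k ≤ n) :
    (s2 n k : ℚ) = ∑ r ∈ ptypes (2 * n - 1 - k) (n - 1),
      (-1 : ℚ) ^ (firstEntry r - (k - 1)) *
        (((2 * n - 2).choose (k - 1) : ℚ) / ((2 * n - 2).choose (firstEntry r) : ℚ)) *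
        (((∑ i, (i.1 + 1) * r i).factorial : ℚ) /
          ((∏ i, (r i).factorial * (i.1 + 1) ^ (r i) : ℕ) : ℚ)) := by
  rcases Nat.lt_or_ge n 2 with hn2 | hn2
  · -- n = k = 1
    have hn : n = 1 := by omega
    have hk1 : k = 1 := by omega
    subst hn hk1
    have hpt : ptypes (2 * 1 - 1 - 1) (1 - 1) = {fun _ : Fin (2 * 1 - 1 - 1) => 0} := by
      apply Finset.ext
      intro r
      simp only [Finset.mem_singleton]
      constructor
      · intro _
        funext t
        exact absurd t.isLt (by omega)
      · intro hr
        subst hr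
        refine mem_ptypes.2 ⟨?_, ?_⟩ <;> simp
    rw [hpt, Finset.sum_singleton, show s2 1 1 = 1 from s2_diag 1]
    rw [firstEntry_zero]
    norm_num
  · -- main case
    obtain ⟨k', rfl⟩ : ∃ k', k = k' + 1 := ⟨k - 1, by omega⟩
    obtain ⟨N, rfl⟩ : ∃ N, n = N + k' + 1 := ⟨n - k' - 1, by omega⟩
    have hNk : 1 ≤ N + k' := by omega
    rw [show 2 * (N + k' + 1) - 1 - (k' + 1) = 2 * N + k' from by omega,
        show N + k' + 1 - 1 = N + k' from by omega,
        show 2 * (N + k' + 1) - 2 = 2 * N + 2 * k' from by omega,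
        show k' + 1 - 1 = k' from by omega]
    rw [s2_eq_Rsum N k']
    set m := 2 * N + k' with hm
    set j := N + k' with hj
    set A := 2 * N + 2 * k' with hA
    have hm1 : 1 ≤ m := by omega
    -- Step A: fiberwise
    have hmaps : ∀ r ∈ ptypes m j, firstEntry r ∈ Finset.range (j + 1) := by
      intro r hr
      have hs := (mem_ptypes.1 hr).1
      have hle : firstEntry r ≤ ∑ i, r i := by
        rw [firstEntry_eq (show 0 < m by omega)]
        exact Finset.single_le_sum (fun _ _ => Nat.zero_le _) (Finset.mem_univ _)
      rw [Finset.mem_range]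
      omega
    rw [← Finset.sum_fiberwise_of_maps_to hmaps
      (fun r => (-1 : ℚ) ^ (firstEntry r - k') *
        ((A.choose k' : ℚ) / (A.choose (firstEntry r) : ℚ)) *
        (((∑ i, (i.1 + 1) * r i).factorial : ℚ) /
          ((∏ i, (r i).factorial * (i.1 + 1) ^ (r i) : ℕ) : ℚ)))]
    -- Step B: evaluate each fiber
    have hfiber : ∀ f ∈ Finset.range (j + 1),
        (∑ r ∈ (ptypes m j).filter (fun r => firstEntry r = f),
          (-1 : ℚ) ^ (firstEntry r - k') *
            ((A.choose k' : ℚ) / (A.choose (firstEntry r) : ℚ)) *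
            (((∑ i, (i.1 + 1) * r i).factorial : ℚ) /
              ((∏ i, (r i).factorial * (i.1 + 1) ^ (r i) : ℕ) : ℚ)))
        = (-1 : ℚ) ^ (f - k') * ((A.choose k' : ℚ) / (A.choose f : ℚ))
            * (m.factorial : ℚ) * ((f.factorial : ℚ))⁻¹ * E (m - f) (j - f) := by
      intro f hfr
      rw [Finset.mem_range] at hfr
      have hfj : f ≤ j := by omega
      have hfm : f ≤ m := by omega
      have hterm : ∀ r ∈ (ptypes m j).filter (fun r => firstEntry r = f),
          (-1 : ℚ) ^ (firstEntry r - k') *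
            ((A.choose k' : ℚ) / (A.choose (firstEntry r) : ℚ)) *
            (((∑ i, (i.1 + 1) * r i).factorial : ℚ) /
              ((∏ i, (r i).factorial * (i.1 + 1) ^ (r i) : ℕ) : ℚ))
          = ((-1 : ℚ) ^ (f - k') * ((A.choose k' : ℚ) / (A.choose f : ℚ))
              * (m.factorial : ℚ)) * iD r := by
        intro r hr
        obtain ⟨hrp, hfe⟩ := Finset.mem_filter.1 hr
        rw [hfe, (mem_ptypes.1 hrp).2, iD, div_eq_mul_inv]
        ring
      rw [Finset.sum_congr rfl hterm, ← Finset.mul_sum, fiber_sum hm1 hfm hfj]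
      ring
    rw [Finset.sum_congr rfl hfiber]
    -- Step C: restrict to Icc k' j
    have hsub : Finset.Icc k' j ⊆ Finset.range (j + 1) := by
      intro f hf
      rw [Finset.mem_Icc] at hf
      rw [Finset.mem_range]
      omega
    rw [← Finset.sum_subset hsub (fun f hf hnf => by
      rw [Finset.mem_range] at hf
      rw [Finset.mem_Icc] at hnf
      have hfk : f < k' := by omega
      rw [E_vanish (show m - f < 2 * (j - f) by omega)]
      ring)]
    -- Step D: reindex
    rw [Rsum]
    refine Finset.sum_nbij' (HSub.hSub j) (HSub.hSub j) ?_ ?_ ?_ ?_ ?_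
    · intro u hu
      rw [Finset.mem_range] at hu
      rw [Finset.mem_Icc]
      omega
    · intro f hf
      rw [Finset.mem_Icc] at hf
      rw [Finset.mem_range]
      omega
    · intro u hu
      rw [Finset.mem_range] at hu
      omega
    · intro f hf
      rw [Finset.mem_Icc] at hf
      omega
    · intro u hu
      rw [Finset.mem_range] at hu
      have hu' : u ≤ N := by omega
      have e1 : j - u - k' = N - u := by omega
      have e2 : m - (j - u) = N + u := by omega
      have e3 : j - (j - u) = u := by omega
      rw [e1, e2, e3]
      -- coefficient identity
      have hfA : j - u ≤ A := by omega
      have hcr := choose_ratio (A := A) (c := k') (f := j - u) (by omega) (by omega)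
      rw [show A - k' = m from by omega, show A - (j - u) = N + k' + u from by omega] at hcr
      have hAf0 : ((A.choose (j - u) : ℚ)) ≠ 0 := by
        exact_mod_cast (Nat.choose_pos hfA).ne'
      have hmf0 : ((m.choose (j - u) : ℚ)) ≠ 0 := by
        exact_mod_cast (Nat.choose_pos (show j - u ≤ m by omega)).ne'
      have hf0 : (((j - u).factorial : ℕ) : ℚ) ≠ 0 := fact_cast_ne
      rw [div_eq_iff hAf0] at hcr
      have hfact : ((m.choose (j - u) : ℚ)) * (((j - u).factorial : ℕ) : ℚ)
          * (((N + u).factorial : ℕ) : ℚ) = ((m.factorial : ℕ) : ℚ) := by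
        have := Nat.choose_mul_factorial_mul_factorial (show j - u ≤ m by omega)
        rw [show m - (j - u) = N + u from by omega] at this
        exact_mod_cast congrArg (fun x : ℕ => (x : ℚ)) this
      rw [Dq]
      have hcoef : ((N + k' + u).choose k' : ℚ) * (((N + u).factorial : ℕ) : ℚ)
          = (A.choose k' : ℚ) / ((A.choose (j - u) : ℚ)) * ((m.factorial : ℕ) : ℚ)
            * ((((j - u).factorial : ℕ) : ℚ))⁻¹ := by
        field_simp
        linear_combination (-((((j - u).factorial : ℕ) : ℚ) * (((N + u).factorial : ℕ) : ℚ))) * hcr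
          + (A.choose k' : ℚ) * hfact
      linear_combination ((-1 : ℚ) ^ (N - u) * E (N + u) u) * hcoef
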